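/- Let f ∈ ℚ[x] be a polynomial of degree d ≥ 1. Then the number of pairwise non-associate irreducible factors of the two-variable polynomial f(X) − f(Y) in ℚ[X,Y] is at most τ(d), the number of positive divisors of d. -/

import Mathlib

open scoped Classical

/-- The number of pairwise non-associate irreducible factors of
`f(X) − f(Y)` in `ℚ[X,Y]`. -/
noncomputable def numIrreducibleFactorsDiff (f : Polynomial ℚ) : ℕ :=
  ((UniqueFactorizationMonoid.factors
      ((Polynomial.aeval (MvPolynomial.X 0) f : MvPolynomial (Fin 2) ℚ) -
        Polynomial.aeval (MvPolynomial.X 1) f)).map Associates.mk).toFinset.card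

open Polynomial MvPolynomial UniqueFactorizationMonoid

noncomputable section AuxDiff

abbrev RR : Type := MvPolynomial (Fin 2) ℚ

lemma deg2 (s : Fin 2 →₀ ℕ) : s.degree = s 0 + s 1 := by
  have h : s.degree = ∑ i : Fin 2, s i :=
    Finset.sum_subset (Finset.subset_univ _)
      (fun i _ hi => Finsupp.notMem_support_iff.mp hi)
  rw [h, Fin.sum_univ_two]

/-- the "grading" map: `X i ↦ X i * t`. -/
noncomputable def DD : RR →ₐ[ℚ] Polynomial RR :=
  MvPolynomial.aeval (fun i : Fin 2 => Polynomial.C (MvPolynomial.X i) * Polynomial.X)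

lemma eval_one_DD (p : RR) : Polynomial.eval 1 (DD p) = p := by
  have h : (Polynomial.evalRingHom (1 : RR)).comp (DD.toRingHom) = RingHom.id RR := by
    apply MvPolynomial.ringHom_ext
    · intro a
      simp [DD, Polynomial.algebraMap_apply, MvPolynomial.algebraMap_eq]
    · intro i
      simp [DD]
  exact RingHom.congr_fun h p

lemma DD_ne_zero {p : RR} (hp : p ≠ 0) : DD p ≠ 0 := fun h => hp (by
  rw [← eval_one_DD p, h, Polynomial.eval_zero])

lemma DD_monomial (s : Fin 2 →₀ ℕ) (a : ℚ) :
    DD (MvPolynomial.monomial s a) =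
      Polynomial.C (MvPolynomial.monomial s a) * Polynomial.X ^ (s.degree) := by
  rw [DD, MvPolynomial.aeval_monomial,
    Finsupp.prod_fintype _ _ (fun i => pow_zero _), Fin.prod_univ_two,
    MvPolynomial.monomial_eq,
    Finsupp.prod_fintype _ _ (fun i => pow_zero _), Fin.prod_univ_two, deg2,
    Polynomial.algebraMap_apply, MvPolynomial.algebraMap_eq]
  simp only [mul_pow, map_mul, map_pow]
  ring

lemma coeff_DD (p : RR) (k : ℕ) :
    (DD p).coeff k = MvPolynomial.homogeneousComponent k p := by
  induction p using MvPolynomial.induction_on' with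
  | monomial s a =>
      rw [DD_monomial, Polynomial.coeff_C_mul, Polynomial.coeff_X_pow,
        mul_ite, mul_one, mul_zero]
      ext d
      rw [MvPolynomial.coeff_homogeneousComponent, apply_ite (MvPolynomial.coeff d),
        MvPolynomial.coeff_zero, MvPolynomial.coeff_monomial]
      split_ifs <;> simp_all
  | add p q hp hq =>
      simp [map_add, Polynomial.coeff_add, hp, hq]

/-- the leading form -/
noncomputable def LL (p : RR) : RR := (DD p).leadingCoeff

lemma LL_ne_zero {p : RR} (hp : p ≠ 0) : LL p ≠ 0 :=
  Polynomial.leadingCoeff_ne_zero.mpr (DD_ne_zero hp)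

lemma LL_mul (p q : RR) : LL (p * q) = LL p * LL q := by
  simp [LL, map_mul, Polynomial.leadingCoeff_mul]

lemma LL_isHomogeneous (p : RR) : (LL p).IsHomogeneous ((DD p).natDegree) := by
  rw [LL, Polynomial.leadingCoeff, coeff_DD]
  exact MvPolynomial.homogeneousComponent_isHomogeneous _ _

end AuxDiff

noncomputable section Aux2

/-- `LL` as a monoid hom. -/
noncomputable def LLhom : RR →* RR where
  toFun := LL
  map_one' := by simp [LL, map_one]
  map_mul' := LL_mul

lemma coeff_aeval_C_mul_X (f : Polynomial ℚ) (r : RR) (k : ℕ) :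
    (Polynomial.aeval (Polynomial.C r * Polynomial.X) f).coeff k
      = MvPolynomial.C (f.coeff k) * r ^ k := by
  induction f using Polynomial.induction_on' with
  | add p q hp hq => simp [map_add, Polynomial.coeff_add, hp, hq, add_mul]
  | monomial n a =>
      rw [Polynomial.aeval_monomial, Polynomial.algebraMap_apply,
        MvPolynomial.algebraMap_eq, mul_pow, ← Polynomial.C_pow, ← mul_assoc,
        ← Polynomial.C_mul, Polynomial.coeff_C_mul, Polynomial.coeff_X_pow,
        Polynomial.coeff_monomial]
      by_cases h : n = k
      · subst h; simp
      · simp [h, Ne.symm h]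

/-- the difference polynomial -/
noncomputable def FF (f : Polynomial ℚ) : RR :=
  (Polynomial.aeval (MvPolynomial.X 0) f : MvPolynomial (Fin 2) ℚ) -
    Polynomial.aeval (MvPolynomial.X 1) f

lemma coeff_DD_FF (f : Polynomial ℚ) (k : ℕ) :
    (DD (FF f)).coeff k
      = MvPolynomial.C (f.coeff k) *
          ((MvPolynomial.X 0 : RR) ^ k - (MvPolynomial.X 1) ^ k) := by
  have h0 : DD (Polynomial.aeval (MvPolynomial.X 0) f)
      = Polynomial.aeval (Polynomial.C (MvPolynomial.X 0) * Polynomial.X) f := by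
    rw [← Polynomial.aeval_algHom_apply]
    congr 1
    simp [DD]
  have h1 : DD (Polynomial.aeval (MvPolynomial.X 1) f)
      = Polynomial.aeval (Polynomial.C (MvPolynomial.X 1) * Polynomial.X) f := by
    rw [← Polynomial.aeval_algHom_apply]
    congr 1
    simp [DD]
  rw [FF, map_sub, Polynomial.coeff_sub, h0, h1, coeff_aeval_C_mul_X,
    coeff_aeval_C_mul_X, mul_sub]

lemma Xpow_sub_ne {d : ℕ} (hd : 1 ≤ d) :
    ((MvPolynomial.X 0 : RR) ^ d - (MvPolynomial.X 1) ^ d) ≠ 0 := by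
  intro h
  have := congrArg (MvPolynomial.aeval (![1, 0] : Fin 2 → ℚ)) h
  simp [zero_pow (by omega : d ≠ 0)] at this

lemma natDegree_DD_FF {f : Polynomial ℚ} (hd : 1 ≤ f.natDegree) :
    (DD (FF f)).natDegree = f.natDegree := by
  have hf : f ≠ 0 := fun h => by simp [h] at hd
  have hne : (DD (FF f)).coeff f.natDegree ≠ 0 := by
    rw [coeff_DD_FF]
    exact mul_ne_zero (by
      simpa [MvPolynomial.C_eq_zero] using Polynomial.leadingCoeff_ne_zero.mpr hf)
      (Xpow_sub_ne hd)
  refine le_antisymm ?_ (Polynomial.le_natDegree_of_ne_zero hne)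
  rw [Polynomial.natDegree_le_iff_coeff_eq_zero]
  intro N hN
  rw [coeff_DD_FF, Polynomial.coeff_eq_zero_of_natDegree_lt hN]
  simp

lemma LL_FF {f : Polynomial ℚ} (hd : 1 ≤ f.natDegree) :
    LL (FF f) = MvPolynomial.C f.leadingCoeff *
      ((MvPolynomial.X 0 : RR) ^ f.natDegree - (MvPolynomial.X 1) ^ f.natDegree) := by
  rw [LL, Polynomial.leadingCoeff, natDegree_DD_FF hd, coeff_DD_FF]
  rfl

lemma FF_ne_zero {f : Polynomial ℚ} (hd : 1 ≤ f.natDegree) : FF f ≠ 0 := by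
  intro h
  have hf : f ≠ 0 := fun h => by simp [h] at hd
  have := LL_FF hd
  rw [h] at this
  simp only [LL] at this
  rw [map_zero, Polynomial.leadingCoeff_zero] at this
  exact (mul_ne_zero (by
      simpa [MvPolynomial.C_eq_zero] using Polynomial.leadingCoeff_ne_zero.mpr hf)
    (Xpow_sub_ne hd)) this.symm

end Aux2

noncomputable section Aux3

lemma support_degree_of_isHomogeneous {h : RR} {k : ℕ} (hh : h.IsHomogeneous k)
    {v : Fin 2 →₀ ℕ} (hv : v ∈ h.support) : v.degree = k := by
  by_contra hne
  exact MvPolynomial.mem_support_iff.mp hv (hh.coeff_eq_zero hne)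

lemma eq_single_of_mem_support {h : RR} {k : ℕ} (hh : h.IsHomogeneous k)
    {v : Fin 2 →₀ ℕ} (hv : v ∈ h.support) (hv1 : v 1 = 0) :
    v = Finsupp.single 0 k := by
  have hdeg := support_degree_of_isHomogeneous hh hv
  rw [deg2, hv1, add_zero] at hdeg
  ext i
  fin_cases i
  · simpa using hdeg
  · simpa using hv1

/-- evaluation `X 0 ↦ X`, `X 1 ↦ 0` of a homogeneous polynomial -/
lemma tau_isHomogeneous {h : RR} {k : ℕ} (hh : h.IsHomogeneous k) :
    MvPolynomial.aeval (![Polynomial.X, 0] : Fin 2 → Polynomial ℚ) h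
      = Polynomial.C (MvPolynomial.coeff (Finsupp.single 0 k) h) * Polynomial.X ^ k := by
  conv_lhs => rw [h.as_sum]
  rw [map_sum]
  rw [Finset.sum_eq_single (Finsupp.single 0 k)]
  · rw [MvPolynomial.aeval_monomial,
      Finsupp.prod_fintype _ _ (fun i => pow_zero _), Fin.prod_univ_two]
    simp [MvPolynomial.algebraMap_eq, Finsupp.single_eq_same,
      Finsupp.single_eq_of_ne (by decide : (0 : Fin 2) ≠ 1)]
  · intro v hv hvne
    rw [MvPolynomial.aeval_monomial,
      Finsupp.prod_fintype _ _ (fun i => pow_zero _), Fin.prod_univ_two]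
    have hv1 : v 1 ≠ 0 := fun h1 => hvne (eq_single_of_mem_support hh hv h1)
    simp [Matrix.cons_val_one, zero_pow hv1]
  · intro hns
    rw [MvPolynomial.notMem_support_iff.mp hns]
    simp

/-- `k`-th coefficient of the evaluation `X 0 ↦ X`, `X 1 ↦ 1` of a homogeneous polynomial -/
lemma sigma_coeff_isHomogeneous {h : RR} {k : ℕ} (hh : h.IsHomogeneous k) :
    (MvPolynomial.aeval (![Polynomial.X, 1] : Fin 2 → Polynomial ℚ) h).coeff k
      = MvPolynomial.coeff (Finsupp.single 0 k) h := by
  conv_lhs => rw [h.as_sum]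
  rw [map_sum, Polynomial.finset_sum_coeff]
  rw [Finset.sum_eq_single (Finsupp.single 0 k)]
  · rw [MvPolynomial.aeval_monomial,
      Finsupp.prod_fintype _ _ (fun i => pow_zero _), Fin.prod_univ_two]
    simp [MvPolynomial.algebraMap_eq, Finsupp.single_eq_same,
      Finsupp.single_eq_of_ne (by decide : (0 : Fin 2) ≠ 1),
      Polynomial.coeff_C_mul, Polynomial.coeff_X_pow]
  · intro v hv hvne
    rw [MvPolynomial.aeval_monomial,
      Finsupp.prod_fintype _ _ (fun i => pow_zero _), Fin.prod_univ_two]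
    have hv0 : v 0 ≠ k := by
      intro h0
      apply hvne
      have hdeg := support_degree_of_isHomogeneous hh hv
      rw [deg2, h0] at hdeg
      exact eq_single_of_mem_support hh hv (by omega)
    simp [MvPolynomial.algebraMap_eq, Polynomial.coeff_C_mul, Polynomial.coeff_X_pow,
      Ne.symm hv0]
  · intro hns
    rw [MvPolynomial.notMem_support_iff.mp hns]
    simp

end Aux3

noncomputable section Aux4

lemma natDegree_DD_pos {g : RR} (hg : Irreducible g) : 1 ≤ (DD g).natDegree := by
  by_contra hk
  have hk0 : (DD g).natDegree = 0 := by omega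
  have hgC : g = MvPolynomial.C (MvPolynomial.coeff 0 g) := by
    have h1 := eval_one_DD g
    rw [Polynomial.eq_C_of_natDegree_eq_zero hk0, Polynomial.eval_C] at h1
    calc g = (DD g).coeff 0 := h1.symm
      _ = MvPolynomial.homogeneousComponent 0 g := coeff_DD g 0
      _ = MvPolynomial.C (MvPolynomial.coeff 0 g) :=
          MvPolynomial.homogeneousComponent_zero g
  have hg0 : g ≠ 0 := hg.ne_zero
  have hc0 : MvPolynomial.coeff 0 g ≠ 0 := fun h => hg0 (by rw [hgC, h, map_zero])
  exact hg.not_isUnit (hgC ▸ (IsUnit.map MvPolynomial.C (isUnit_iff_ne_zero.mpr hc0)))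

lemma sigma_LL_not_unit {f : Polynomial ℚ} (hd : 1 ≤ f.natDegree) {g : RR}
    (hg : Irreducible g) (hdvd : g ∣ FF f) :
    ¬ IsUnit (MvPolynomial.aeval (![Polynomial.X, 1] : Fin 2 → Polynomial ℚ) (LL g)) := by
  set k := (DD g).natDegree with hk
  have hk1 : 1 ≤ k := natDegree_DD_pos hg
  have hhom : (LL g).IsHomogeneous k := LL_isHomogeneous g
  -- LL g divides LL (FF f)
  obtain ⟨c, hc⟩ := hdvd
  have hLdvd : LL g ∣ LL (FF f) := ⟨LL c, by rw [← LL_mul, ← hc]⟩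
  -- the coefficient at `single 0 k` of `LL g` is nonzero
  have htau : MvPolynomial.aeval (![Polynomial.X, 0] : Fin 2 → Polynomial ℚ) (LL (FF f)) ≠ 0 := by
    rw [LL_FF hd]
    have hf : f ≠ 0 := fun h => by simp [h] at hd
    simp only [map_mul, map_sub, map_pow, MvPolynomial.aeval_C, MvPolynomial.aeval_X]
    rw [show (![Polynomial.X, 0] : Fin 2 → Polynomial ℚ) 0 = Polynomial.X from rfl,
      show (![Polynomial.X, 0] : Fin 2 → Polynomial ℚ) 1 = 0 from rfl]
    rw [zero_pow (by omega : f.natDegree ≠ 0), sub_zero]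
    refine mul_ne_zero ?_ (pow_ne_zero _ Polynomial.X_ne_zero)
    simpa [Polynomial.algebraMap_apply] using Polynomial.leadingCoeff_ne_zero.mpr hf
  have hcoeff : MvPolynomial.coeff (Finsupp.single 0 k) (LL g) ≠ 0 := by
    intro h0
    apply htau
    obtain ⟨e, he⟩ := hLdvd
    rw [he, map_mul, tau_isHomogeneous hhom, h0, map_zero, zero_mul, zero_mul]
  -- so σ (LL g) has a nonzero coefficient in degree k ≥ 1
  intro hunit
  have hdeg0 := Polynomial.natDegree_eq_zero_of_isUnit hunit
  have := sigma_coeff_isHomogeneous hhom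
  rw [Polynomial.coeff_eq_zero_of_natDegree_lt (by omega)] at this
  exact hcoeff this.symm

end Aux4

noncomputable section Aux5

open UniqueFactorizationMonoid

lemma card_le_card_normalizedFactors_of_prod_dvd
    {α : Type*} [CommMonoidWithZero α] [UniqueFactorizationMonoid α]
    [NormalizationMonoid α] [Nontrivial α]
    (t : Multiset α) (hu : ∀ x ∈ t, ¬ IsUnit x) {A : α} (hA : A ≠ 0)
    (h : t.prod ∣ A) :
    Multiset.card t ≤ Multiset.card (normalizedFactors A) := by
  have ht0 : t.prod ≠ 0 := fun h0 => hA (zero_dvd_iff.mp (h0 ▸ h))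
  have hx0 : ∀ x ∈ t, x ≠ 0 := fun x hx hx0 =>
    ht0 (Multiset.prod_eq_zero (hx0 ▸ hx))
  have key : ∀ (t : Multiset α), (∀ x ∈ t, x ≠ 0) → (∀ x ∈ t, ¬ IsUnit x) →
      Multiset.card t ≤ Multiset.card (normalizedFactors t.prod) := by
    intro t
    induction t using Multiset.induction with
    | empty => simp
    | cons a s ih =>
        intro h0 hu
        have ha0 : a ≠ 0 := h0 a (Multiset.mem_cons_self a s)
        have hs0 : s.prod ≠ 0 := Multiset.prod_ne_zero
          (fun hc => h0 0 (Multiset.mem_cons_of_mem hc) rfl)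
        rw [Multiset.prod_cons, normalizedFactors_mul ha0 hs0, Multiset.card_add,
          Multiset.card_cons]
        have h1 : 1 ≤ Multiset.card (normalizedFactors a) := by
          rw [Nat.one_le_iff_ne_zero, Ne, Multiset.card_eq_zero]
          intro hc
          have hassoc := prod_normalizedFactors ha0
          rw [hc, Multiset.prod_zero] at hassoc
          exact hu a (Multiset.mem_cons_self a s)
            (associated_one_iff_isUnit.mp hassoc.symm)
        have h2 := ih (fun x hx => h0 x (Multiset.mem_cons_of_mem hx))
          (fun x hx => hu x (Multiset.mem_cons_of_mem hx))
        omega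
  calc Multiset.card t ≤ Multiset.card (normalizedFactors t.prod) := key t hx0 hu
    _ ≤ Multiset.card (normalizedFactors A) :=
        Multiset.card_le_card
          ((dvd_iff_normalizedFactors_le_normalizedFactors ht0 hA).mp h)

end Aux5

noncomputable section Aux6

open UniqueFactorizationMonoid

lemma card_nf_X_pow_sub_one {d : ℕ} (hd : 0 < d) :
    Multiset.card (normalizedFactors ((Polynomial.X : Polynomial ℚ) ^ d - 1))
      = d.divisors.card := by
  have hprod : ((d.divisors.val.map fun e => Polynomial.cyclotomic e ℚ)).prod
      = (Polynomial.X : Polynomial ℚ) ^ d - 1 := by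
    rw [← Polynomial.prod_cyclotomic_eq_X_pow_sub_one hd ℚ]
    rfl
  rw [← hprod, normalizedFactors_prod_eq _ (by
    intro a ha
    obtain ⟨e, he, rfl⟩ := Multiset.mem_map.mp ha
    exact Polynomial.cyclotomic.irreducible_rat (Nat.pos_of_mem_divisors he))]
  rw [Multiset.card_map, Multiset.card_map]
  rfl

end Aux6

/-- For `f ∈ ℚ[x]` of degree `d ≥ 1`, the number of pairwise non-associate irreducible
factors of `f(X) − f(Y)` in `ℚ[X,Y]` is at most `τ(d)`. -/
theorem numIrreducibleFactorsDiff_le_tau (f : Polynomial ℚ) (hd : 1 ≤ f.natDegree) :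
    numIrreducibleFactorsDiff f ≤ (f.natDegree).divisors.card := by
  classical
  have hf : f ≠ 0 := fun h => by simp [h] at hd
  have hF : FF f ≠ 0 := FF_ne_zero hd
  set σ : RR →ₐ[ℚ] Polynomial ℚ :=
    MvPolynomial.aeval (![Polynomial.X, 1] : Fin 2 → Polynomial ℚ) with hσ
  set S : Finset (Associates RR) :=
    ((UniqueFactorizationMonoid.factors (FF f)).map Associates.mk).toFinset with hS
  have hgoal_eq : numIrreducibleFactorsDiff f = S.card := rfl
  -- choose representatives
  have hrep : ∀ s : Associates RR, ∃ g : RR,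
      s ∈ S → Prime g ∧ g ∣ FF f ∧ Associates.mk g = s := by
    intro s
    by_cases hs : s ∈ S
    · rw [hS, Multiset.mem_toFinset, Multiset.mem_map] at hs
      obtain ⟨g, hgmem, hgs⟩ := hs
      exact ⟨g, fun _ => ⟨UniqueFactorizationMonoid.prime_of_factor g hgmem,
        (Multiset.dvd_prod hgmem).trans (UniqueFactorizationMonoid.factors_prod hF).dvd, hgs⟩⟩
    · exact ⟨0, fun h => absurd h hs⟩
  choose g hg using hrep
  have hSprime : ∀ s ∈ S, Prime s := fun s hs =>
    (hg s hs).2.2 ▸ Associates.prime_mk.mpr (hg s hs).1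
  have hSdvd : ∀ s ∈ S, s ∣ Associates.mk (FF f) := fun s hs =>
    (hg s hs).2.2 ▸ Associates.mk_dvd_mk.mpr (hg s hs).2.1
  have hprod : (∏ s ∈ S, s) ∣ Associates.mk (FF f) :=
    Finset.prod_primes_dvd _ hSprime hSdvd
  have hmkprod : (∏ s ∈ S, s) = Associates.mk (∏ s ∈ S, g s) := by
    rw [show Associates.mk (∏ s ∈ S, g s) = ∏ s ∈ S, Associates.mk (g s) from
      map_prod Associates.mkMonoidHom g S]
    exact Finset.prod_congr rfl (fun s hs => ((hg s hs).2.2).symm)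
  have hPdvd : (∏ s ∈ S, g s) ∣ FF f := Associates.mk_dvd_mk.mp (hmkprod ▸ hprod)
  obtain ⟨c, hc⟩ := hPdvd
  have hLL : LL (FF f) = (∏ s ∈ S, LL (g s)) * LL c := by
    rw [hc, LL_mul, show LL (∏ s ∈ S, g s) = ∏ s ∈ S, LL (g s) from map_prod LLhom g S]
  have hσdvd : (∏ s ∈ S, σ (LL (g s))) ∣ σ (LL (FF f)) := by
    rw [hLL, map_mul, map_prod]
    exact Dvd.intro _ rfl
  have hσLF : σ (LL (FF f)) = Polynomial.C f.leadingCoeff *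
      ((Polynomial.X : Polynomial ℚ) ^ f.natDegree - 1) := by
    rw [LL_FF hd, hσ]
    simp only [map_mul, map_sub, map_pow, MvPolynomial.aeval_C, MvPolynomial.aeval_X]
    rw [show (![Polynomial.X, 1] : Fin 2 → Polynomial ℚ) 0 = Polynomial.X from rfl,
      show (![Polynomial.X, 1] : Fin 2 → Polynomial ℚ) 1 = 1 from rfl, one_pow]
    rw [Polynomial.algebraMap_apply]
    norm_num
  have hXd_ne : ((Polynomial.X : Polynomial ℚ) ^ f.natDegree - 1) ≠ 0 := by
    intro h
    have h2 := congrArg Polynomial.natDegree (sub_eq_zero.mp h)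
    rw [Polynomial.natDegree_X_pow, Polynomial.natDegree_one] at h2
    omega
  have hClc : IsUnit (Polynomial.C f.leadingCoeff) :=
    Polynomial.isUnit_C.mpr (isUnit_iff_ne_zero.mpr (Polynomial.leadingCoeff_ne_zero.mpr hf))
  have hσLF_ne : σ (LL (FF f)) ≠ 0 := by
    rw [hσLF]
    exact mul_ne_zero hClc.ne_zero hXd_ne
  set W : Multiset (Polynomial ℚ) := S.val.map (fun s => σ (LL (g s))) with hW
  have hWprod : W.prod = ∏ s ∈ S, σ (LL (g s)) := rfl
  have hWcard : Multiset.card W = S.card := Multiset.card_map _ _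
  have hWnu : ∀ x ∈ W, ¬ IsUnit x := by
    intro x hx
    obtain ⟨s, hs, rfl⟩ := Multiset.mem_map.mp hx
    obtain ⟨hp, hdvd', _⟩ := hg s hs
    exact sigma_LL_not_unit hd hp.irreducible hdvd'
  have hcount := card_le_card_normalizedFactors_of_prod_dvd W hWnu hσLF_ne
    (hWprod ▸ hσdvd)
  have hassoc : Associated (σ (LL (FF f)))
      ((Polynomial.X : Polynomial ℚ) ^ f.natDegree - 1) := by
    rw [hσLF, mul_comm]
    exact associated_mul_unit_left _ _ hClc
  rw [hgoal_eq, ← hWcard]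
  calc Multiset.card W
      ≤ Multiset.card (UniqueFactorizationMonoid.normalizedFactors (σ (LL (FF f)))) := hcount
    _ = Multiset.card (UniqueFactorizationMonoid.normalizedFactors
          ((Polynomial.X : Polynomial ℚ) ^ f.natDegree - 1)) := by
        rw [hassoc.normalizedFactors_eq]
    _ = (f.natDegree).divisors.card := card_nf_X_pow_sub_one (by omega)
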